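/- Let u be a factor of x of length n ≥ 1, and let M₂(n) (resp. m₂(n)) denote the maximum (resp. minimum) number of occurrences of the letter 2 in a factor of x of length n. Then |u|₂ = M₂(n) if and only if |φ(u)|₀ = M₀(2n), and |u|₂ = m₂(n) if and only if |φ(u)|₀ = m₀(2n). -/

import Mathlib

/-- The 2-kernel of a sequence `s : ℕ → ℤ`. -/
def kernel2 (s : ℕ → ℤ) : Set (ℕ → ℤ) :=
  {t | ∃ i j : ℕ, j < 2 ^ i ∧ t = fun n => s (2 ^ i * n + j)}

/-- A sequence is 2-regular if the ℤ-module spanned by its 2-kernel is finitely generated. -/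
def IsTwoRegular (s : ℕ → ℤ) : Prop :=
  (Submodule.span ℤ (kernel2 s)).FG

/-- A sequence is 2-automatic if its 2-kernel is finite. -/
def IsTwoAutomatic (s : ℕ → ℤ) : Prop :=
  (kernel2 s).Finite

/-- The period-doubling word, fixed point (starting with 0) of 0 ↦ 01, 1 ↦ 00:
its `n`-th letter is the parity of the 2-adic valuation of `n+1`. -/
def pd (n : ℕ) : ℕ := (n + 1).factorization 2 % 2

/-- The Thue–Morse word, fixed point (starting with 0) of 0 ↦ 01, 1 ↦ 10:
its `n`-th letter is the parity of the binary digit sum of `n`. -/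
def tm (n : ℕ) : ℕ := (Nat.digits 2 n).sum % 2

/-- The 2-block coding `x = block(p, 2)` of the period-doubling word. -/
def xw (n : ℕ) : ℕ := 2 * pd n + pd (n + 1)

/-- The 2-block coding `y = block(t, 2)` of the Thue–Morse word. -/
def yw (n : ℕ) : ℕ := 2 * tm n + tm (n + 1)

/-- The factor of an infinite word `w` of length `len` occurring at position `i`. -/
def factorAt (w : ℕ → ℕ) (i len : ℕ) : List ℕ :=
  (List.range len).map fun k => w (i + k)

/-- `u` is a factor of the infinite word `w`. -/
def IsFactor (w : ℕ → ℕ) (u : List ℕ) : Prop :=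
  ∃ i, u = factorAt w i u.length

/-- Maximal number of 0's in a factor of `x` of length `n`. -/
noncomputable def M0 (n : ℕ) : ℕ := sSup {k | ∃ i, (factorAt xw i n).count 0 = k}

/-- Minimal number of 0's in a factor of `x` of length `n`. -/
noncomputable def m0 (n : ℕ) : ℕ := sInf {k | ∃ i, (factorAt xw i n).count 0 = k}

noncomputable def D0 (n : ℕ) : ℕ := M0 n - m0 n

/-- Maximal number of 2's in a factor of `x` of length `n`. -/
noncomputable def M2c (n : ℕ) : ℕ := sSup {k | ∃ i, (factorAt xw i n).count 2 = k}

/-- Minimal number of 2's in a factor of `x` of length `n`. -/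
noncomputable def m2c (n : ℕ) : ℕ := sInf {k | ∃ i, (factorAt xw i n).count 2 = k}

/-- The max-jump function for `M0`. -/
noncomputable def JM0 : ℕ → ℕ
  | 0 => 0
  | n + 1 => if M0 n < M0 (n + 1) then 1 else 0

/-- The min-jump function for `m0`. -/
noncomputable def jm0 (n : ℕ) : ℕ := if m0 n < m0 (n + 1) then 1 else 0

/-- Maximal total number of 1's and 2's in a factor of `y` of length `n`. -/
noncomputable def M12 (n : ℕ) : ℕ :=
  sSup {k | ∃ i, (factorAt yw i n).count 1 + (factorAt yw i n).count 2 = k}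

/-- Minimal total number of 1's and 2's in a factor of `y` of length `n`. -/
noncomputable def m12 (n : ℕ) : ℕ :=
  sInf {k | ∃ i, (factorAt yw i n).count 1 + (factorAt yw i n).count 2 = k}

noncomputable def D12 (n : ℕ) : ℕ := M12 n - m12 n

/-- Maximal total number of 0's and 3's in a factor of `y` of length `n`. -/
noncomputable def M03 (n : ℕ) : ℕ :=
  sSup {k | ∃ i, (factorAt yw i n).count 0 + (factorAt yw i n).count 3 = k}

/-- Minimal total number of 0's and 3's in a factor of `y` of length `n`. -/
noncomputable def m03 (n : ℕ) : ℕ :=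
  sInf {k | ∃ i, (factorAt yw i n).count 0 + (factorAt yw i n).count 3 = k}

/-- The max-jump function for `M03`. -/
noncomputable def JM03 (n : ℕ) : ℕ := if M03 (n - 1) < M03 n then 1 else 0

/-- The min-jump function for `m03`. -/
noncomputable def jm03 (n : ℕ) : ℕ := if m03 n < m03 (n + 1) then 1 else 0

/-- Abelian complexity: the number of abelian equivalence classes (i.e. distinct
multisets of letters) of factors of `w` of length `n`. -/
noncomputable def abComplexity (w : ℕ → ℕ) (n : ℕ) : ℕ :=
  Set.ncard {m : Multiset ℕ | ∃ i, (↑(factorAt w i n) : Multiset ℕ) = m}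

/-- The number of occurrences of `v` as a factor of `u`. -/
def countFactor (u v : List ℕ) : ℕ :=
  ((List.range (u.length + 1 - v.length)).filter
    fun i => decide ((u.drop i).take v.length = v)).length

/-- 2-abelian complexity: the number of 2-abelian equivalence classes of factors of `w`
of length `n`, where two words are 2-abelian equivalent when every word of length at most 2
occurs equally often in both. -/
noncomputable def abel2Complexity (w : ℕ → ℕ) (n : ℕ) : ℕ :=
  Set.ncard {f : List ℕ → ℕ |
    ∃ i, f = fun v => if v.length ≤ 2 then countFactor (factorAt w i n) v else 0}

/-- The morphism φ : 0 ↦ 12, 1 ↦ 12, 2 ↦ 00. -/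
def phiL : ℕ → List ℕ
  | 0 => [1, 2]
  | 1 => [1, 2]
  | 2 => [0, 0]
  | _ => []

/-- The morphism τ : 0 ↦ 0, 1 ↦ 2, 2 ↦ 1. -/
def tauL : ℕ → ℕ
  | 1 => 2
  | 2 => 1
  | n => n


lemma pd_even (k : ℕ) : pd (2*k) = 0 := by
  unfold pd
  rw [Nat.factorization_eq_zero_of_not_dvd (by omega)]

lemma pd_odd (k : ℕ) : pd (2*k+1) = (pd k + 1) % 2 := by
  unfold pd
  have h : 2*k+1+1 = 2*(k+1) := by ring
  rw [h, Nat.factorization_mul (by norm_num) (by omega)]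
  simp [Nat.Prime.factorization_self Nat.prime_two]
  omega

lemma xw_eq_two_iff (k : ℕ) : xw k = 2 ↔ (k+1).factorization 2 % 2 = 1 := by
  unfold xw pd
  constructor
  · intro h; omega
  · intro h
    have h1 : 2 ∣ (k+1) := Nat.dvd_of_factorization_pos (by omega)
    have h2 : ¬ 2 ∣ (k+1+1) := by omega
    rw [Nat.factorization_eq_zero_of_not_dvd h2]
    omega

lemma xw_even_zero (k : ℕ) : (xw (2*k) = 0) ↔ xw k = 2 := by
  rw [xw_eq_two_iff]
  show 2 * pd (2*k) + pd (2*k+1) = 0 ↔ _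
  rw [pd_even, pd_odd]
  unfold pd
  omega

lemma xw_odd_zero (k : ℕ) : (xw (2*k+1) = 0) ↔ xw k = 2 := by
  rw [xw_eq_two_iff]
  show 2 * pd (2*k+1) + pd (2*k+1+1) = 0 ↔ _
  have h : 2*k+1+1 = 2*(k+1) := by ring
  rw [pd_odd, h, pd_even]
  unfold pd
  omega

lemma factorAt_succ (w : ℕ → ℕ) (i m : ℕ) :
    factorAt w i (m+1) = factorAt w i m ++ [w (i+m)] := by
  unfold factorAt
  rw [List.range_succ, List.map_append]
  rfl

lemma count_singleton' (a c : ℕ) : ([a] : List ℕ).count c = if a = c then 1 else 0 := by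
  by_cases h : a = c <;> simp [h, List.count_singleton]

lemma count0_even (j n : ℕ) :
    (factorAt xw (2*j) (2*n)).count 0 = 2 * (factorAt xw j n).count 2 := by
  induction n with
  | zero => simp [factorAt]
  | succ n ih =>
    have h2 : 2*(n+1) = (2*n+1)+1 := by ring
    rw [h2, factorAt_succ, factorAt_succ, factorAt_succ, List.count_append,
      List.count_append, List.count_append, ih, count_singleton', count_singleton',
      count_singleton']
    have p1 : 2*j + 2*n = 2*(j+n) := by ring
    have p2 : 2*j + (2*n+1) = 2*(j+n)+1 := by ring
    rw [p1, p2]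
    have e1 := xw_even_zero (j+n)
    have e2 := xw_odd_zero (j+n)
    by_cases hx : xw (j+n) = 2
    · rw [if_pos (e1.mpr hx), if_pos (e2.mpr hx), if_pos hx]; ring
    · rw [if_neg (fun h => hx (e1.mp h)), if_neg (fun h => hx (e2.mp h)), if_neg hx]; ring

lemma count0_odd (j n : ℕ) :
    (factorAt xw (2*j+1) (2*n)).count 0
      = (factorAt xw j n).count 2 + (factorAt xw (j+1) n).count 2 := by
  induction n with
  | zero => simp [factorAt]
  | succ n ih =>
    have h2 : 2*(n+1) = (2*n+1)+1 := by ring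
    rw [h2, factorAt_succ, factorAt_succ, factorAt_succ, factorAt_succ,
      List.count_append, List.count_append, List.count_append, List.count_append,
      ih, count_singleton', count_singleton', count_singleton', count_singleton']
    have p1 : 2*j+1 + 2*n = 2*(j+n)+1 := by ring
    have p2 : 2*j+1 + (2*n+1) = 2*(j+n+1) := by ring
    have p3 : j+1+n = j+n+1 := by ring
    rw [p1, p2, p3]
    have e1 := xw_odd_zero (j+n)
    have e2 := xw_even_zero (j+n+1)
    by_cases hx : xw (j+n) = 2 <;> by_cases hy : xw (j+n+1) = 2
    · rw [if_pos (e1.mpr hx), if_pos (e2.mpr hy), if_pos hx, if_pos hy]; ring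
    · rw [if_pos (e1.mpr hx), if_neg (fun h => hy (e2.mp h)), if_pos hx, if_neg hy]; ring
    · rw [if_neg (fun h => hx (e1.mp h)), if_pos (e2.mpr hy), if_neg hx, if_pos hy]; ring
    · rw [if_neg (fun h => hx (e1.mp h)), if_neg (fun h => hy (e2.mp h)), if_neg hx,
        if_neg hy]; ring

lemma flatMap_count0 (u : List ℕ) : (u.flatMap phiL).count 0 = 2 * u.count 2 := by
  induction u with
  | nil => simp
  | cons a u ih =>
    rw [List.flatMap_cons, List.count_append, ih, List.count_cons]
    match a with
    | 0 => simp [phiL]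
    | 1 => simp [phiL]
    | 2 => simp [phiL]; ring
    | (m+3) => simp [phiL]

lemma count_le' (i len c : ℕ) : (factorAt xw i len).count c ≤ len := by
  calc (factorAt xw i len).count c ≤ (factorAt xw i len).length := List.count_le_length
  _ = len := by simp [factorAt]

lemma bdd (len c : ℕ) : BddAbove {k | ∃ i, (factorAt xw i len).count c = k} :=
  ⟨len, fun _ ⟨i, hi⟩ => hi ▸ count_le' i len c⟩

lemma mem_set (len c i : ℕ) :
    (factorAt xw i len).count c ∈ {k | ∃ i, (factorAt xw i len).count c = k} :=
  ⟨i, rfl⟩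

lemma nonempty_set (len c : ℕ) : {k | ∃ i, (factorAt xw i len).count c = k}.Nonempty :=
  ⟨_, mem_set len c 0⟩

lemma M0_eq (n : ℕ) : M0 (2*n) = 2 * M2c n := by
  apply le_antisymm
  · obtain ⟨i, hi⟩ := Nat.sSup_mem (nonempty_set (2*n) 0) (bdd (2*n) 0)
    rw [M0, ← hi]
    rcases Nat.even_or_odd i with ⟨j, hj⟩ | ⟨j, hj⟩
    · rw [hj, show j + j = 2*j by ring, count0_even]
      exact Nat.mul_le_mul_left 2 (le_csSup (bdd n 2) (mem_set n 2 j))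
    · rw [hj, count0_odd]
      have a1 := le_csSup (bdd n 2) (mem_set n 2 j)
      have a2 := le_csSup (bdd n 2) (mem_set n 2 (j+1))
      rw [M2c] at *
      omega
  · obtain ⟨i, hi⟩ := Nat.sSup_mem (nonempty_set n 2) (bdd n 2)
    rw [M2c, ← hi, ← count0_even i n]
    exact le_csSup (bdd (2*n) 0) (mem_set (2*n) 0 (2*i))

lemma m0_eq (n : ℕ) : m0 (2*n) = 2 * m2c n := by
  apply le_antisymm
  · obtain ⟨i, hi⟩ := Nat.sInf_mem (nonempty_set n 2)
    rw [m2c, ← hi, ← count0_even i n]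
    exact Nat.sInf_le (mem_set (2*n) 0 (2*i))
  · obtain ⟨i, hi⟩ := Nat.sInf_mem (nonempty_set (2*n) 0)
    rw [m0, ← hi]
    rcases Nat.even_or_odd i with ⟨j, hj⟩ | ⟨j, hj⟩
    · rw [hj, show j + j = 2*j by ring, count0_even]
      exact Nat.mul_le_mul_left 2 (Nat.sInf_le (mem_set n 2 j))
    · rw [hj, count0_odd]
      have a1 := Nat.sInf_le (mem_set n 2 j)
      have a2 := Nat.sInf_le (mem_set n 2 (j+1))
      rw [m2c]
      omega

theorem stmt10 (n : ℕ) (hn : 1 ≤ n) (u : List ℕ)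
    (hu : IsFactor xw u) (hlen : u.length = n) :
    (u.count 2 = M2c n ↔ (u.flatMap phiL).count 0 = M0 (2 * n)) ∧
    (u.count 2 = m2c n ↔ (u.flatMap phiL).count 0 = m0 (2 * n)) := by
  obtain ⟨i, hi⟩ := hu
  rw [hlen] at hi
  subst hi
  rw [flatMap_count0, M0_eq, m0_eq]
  have hmem := mem_set n 2 i
  have h1 : (factorAt xw i n).count 2 ≤ M2c n := le_csSup (bdd n 2) hmem
  have h2 : m2c n ≤ (factorAt xw i n).count 2 := Nat.sInf_le hmem
  constructor <;> constructor <;> intro h <;> omega
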